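/- arXiv:1802.10006 — 2 statements merged into one kernel-verified Lean document; each statement's English description precedes it below -/
import Mathlib

section
/- Let X be a finite T₀-space and let A be a subspace of X. Then A is a dbp–retract of X if and only if for every x ∈ X the set U_x ∩ A has a maximum in the specialization order. Equivalently, A is a dbp–retract of X if and only if U_x ∩ A has a maximum for every x ∈ X − A. -/
open unitInterval

set_option autoImplicit false

universe u v

/-- The specialization preorder: `x ≤ y` iff every open set containing `y` contains `x`. -/
def specLE {X : Type*} [TopologicalSpace X] (x y : X) : Prop :=
  ∀ U : Set X, IsOpen U → y ∈ U → x ∈ U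

/-- A continuous map `i : A → X` is a (Hurewicz) cofibration iff it has the homotopy
extension property with respect to all topological spaces. -/
def IsCofibration {A : Type*} {X : Type*} [TopologicalSpace A] [TopologicalSpace X]
    (i : C(A, X)) : Prop :=
  ∀ (Z : Type v) [TopologicalSpace Z] (f : C(X, Z)) (H : C(A × I, Z)),
    (∀ a, H (a, 0) = f (i a)) →
    ∃ G : C(X × I, Z),
      (∀ x, G (x, 0) = f x) ∧ ∀ a t, G (i a, t) = H (a, t)

/-- `x` is a down beat point of the subspace `S`:
the set of points of `S` strictly below `x` has a maximum. -/
def IsDownBeatPoint {X : Type*} [TopologicalSpace X] (S : Set X) (x : X) : Prop :=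
  x ∈ S ∧ ∃ m ∈ S, m ≠ x ∧ specLE m x ∧
    ∀ z ∈ S, z ≠ x → specLE z x → specLE z m

/-- `T` is a dbp–retract of `S`: `T` is obtained from `S` by successively
removing down beat points. -/
inductive IsDbpRetract {X : Type*} [TopologicalSpace X] : Set X → Set X → Prop
  | refl (S : Set X) : IsDbpRetract S S
  | step {S T : Set X} (x : X) (hx : IsDownBeatPoint S x)
      (h : IsDbpRetract (S \ {x}) T) : IsDbpRetract S T

/-- The minimal open set containing `x` (in a finite space): the intersection of all
open sets containing `x`. -/
def minOpen {X : Type*} [TopologicalSpace X] (x : X) : Set X :=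
  ⋂₀ {U : Set X | IsOpen U ∧ x ∈ U}

section Aux

variable {X : Type u} [TopologicalSpace X]

lemma specLE_refl (x : X) : specLE x x := fun _ _ h => h

lemma specLE_trans {x y z : X} (h1 : specLE x y) (h2 : specLE y z) : specLE x z :=
  fun U hU hz => h1 U hU (h2 U hU hz)

lemma specLE_antisymm [T0Space X] {x y : X} (h1 : specLE x y) (h2 : specLE y x) : x = y := by
  apply Inseparable.eq
  rw [inseparable_iff_forall_isOpen]
  exact fun U hU => ⟨fun hx => h2 U hU hx, fun hy => h1 U hU hy⟩

lemma mem_minOpen {z x : X} : z ∈ minOpen x ↔ specLE z x := by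
  constructor
  · intro h U hU hx
    exact h U ⟨hU, hx⟩
  · intro h U hU
    exact h U hU.1 hU.2

lemma IsDbpRetract.subset {S T : Set X} (h : IsDbpRetract S T) : T ⊆ S := by
  induction h with
  | refl S => exact subset_rfl
  | step x hx h ih => exact ih.trans Set.diff_subset

/-- Forward direction: a dbp-retract has maxima below every point of `S`. -/
lemma IsDbpRetract.exists_max {S T : Set X} (h : IsDbpRetract S T) :
    ∀ x ∈ S, ∃ m ∈ T, specLE m x ∧ ∀ z ∈ T, specLE z x → specLE z m := by
  induction h with
  | refl S =>
    intro x hx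
    exact ⟨x, hx, specLE_refl x, fun z hz hzx => hzx⟩
  | step x₀ hx₀ h ih =>
    intro x hx
    by_cases hxx : x = x₀
    · subst hxx
      obtain ⟨m₀, hm₀S, hne, hle, hmax⟩ := hx₀.2
      obtain ⟨m, hmT, hmle, hmmax⟩ := ih m₀ ⟨hm₀S, by simpa using hne⟩
      refine ⟨m, hmT, specLE_trans hmle hle, fun z hz hzx => ?_⟩
      have hzS := h.subset hz
      exact hmmax z hz (hmax z hzS.1 (by simpa using hzS.2) hzx)
    · obtain ⟨m, hmT, hmle, hmmax⟩ := ih x ⟨hx, by simpa using hxx⟩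
      exact ⟨m, hmT, hmle, hmmax⟩

/-- Existence of minimal elements for the specialization order on finite T₀ spaces. -/
lemma exists_specLE_minimal [Finite X] [T0Space X] :
    ∀ n : ℕ, ∀ B : Set X, B.ncard = n → B.Nonempty →
      ∃ x ∈ B, ∀ z ∈ B, specLE z x → z = x := by
  intro n
  induction n using Nat.strong_induction_on with
  | _ n ih =>
    intro B hB hne
    obtain ⟨x, hx⟩ := hne
    by_cases hmin : ∀ z ∈ B, specLE z x → z = x
    · exact ⟨x, hx, hmin⟩
    · push_neg at hmin
      obtain ⟨z, hz, hzx, hzne⟩ := hmin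
      have hsub : {w ∈ B | specLE w x ∧ w ≠ x} ⊆ B := fun w hw => hw.1
      have hxnot : x ∉ {w ∈ B | specLE w x ∧ w ≠ x} := fun h => h.2.2 rfl
      have hlt : ({w ∈ B | specLE w x ∧ w ≠ x}).ncard < n := by
        rw [← hB]
        exact Set.ncard_lt_ncard
          ((Set.ssubset_iff_of_subset hsub).mpr ⟨x, hx, hxnot⟩) (Set.toFinite B)
      obtain ⟨w, hwB', hwmin⟩ := ih _ hlt _ rfl ⟨z, hz, hzx, hzne⟩
      refine ⟨w, hwB'.1, fun u hu huw => ?_⟩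
      by_contra hune
      have hux : u ≠ x := by
        rintro rfl
        exact hwB'.2.2 (specLE_antisymm hwB'.2.1 huw)
      exact hune (hwmin u ⟨hu, specLE_trans huw hwB'.2.1, hux⟩ huw)

/-- Backward direction. -/
lemma backward_dbp [Finite X] [T0Space X] {A : Set X}
    (hA : ∀ x : X, x ∉ A → ∃ m ∈ minOpen x ∩ A, ∀ z ∈ minOpen x ∩ A, specLE z m) :
    ∀ n : ℕ, ∀ S : Set X, (S \ A).ncard = n → A ⊆ S → IsDbpRetract S A := by
  intro n
  induction n using Nat.strong_induction_on with
  | _ n ih =>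
    intro S hn hAS
    rcases Set.eq_empty_or_nonempty (S \ A) with he | hne
    · have : S = A := (Set.diff_eq_empty.mp he).antisymm hAS
      rw [this]
      exact IsDbpRetract.refl A
    · obtain ⟨x, hxB, hxmin⟩ := exists_specLE_minimal (S \ A).ncard (S \ A) rfl hne
      obtain ⟨m, ⟨hmU, hmA⟩, hmmax⟩ := hA x hxB.2
      have hdbp : IsDownBeatPoint S x := by
        refine ⟨hxB.1, m, hAS hmA, fun h => hxB.2 (h ▸ hmA), mem_minOpen.mp hmU, ?_⟩
        intro z hzS hzne hzx
        have hzA : z ∈ A := by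
          by_contra hzA
          exact hzne (hxmin z ⟨hzS, hzA⟩ hzx)
        exact hmmax z ⟨mem_minOpen.mpr hzx, hzA⟩
      refine IsDbpRetract.step x hdbp (ih ((S \ {x}) \ A).ncard ?_ _ rfl ?_)
      · rw [← hn, Set.diff_diff_comm]
        exact Set.ncard_lt_ncard (Set.sdiff_singleton_ssubset.mpr hxB) (Set.toFinite _)
      · intro a ha
        exact ⟨hAS ha, by simp only [Set.mem_singleton_iff]; rintro rfl; exact hxB.2 ha⟩

end Aux

/-- Let `X` be a finite T₀-space and `A ⊆ X`. Then `A` is a dbp–retract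
of `X` iff `U_x ∩ A` has a maximum (in the specialization order) for every `x ∈ X`;
equivalently, iff `U_x ∩ A` has a maximum for every `x ∈ X − A`. -/
theorem dbpRetract_iff_minOpen_inter_hasMax
    {X : Type u} [TopologicalSpace X] [Finite X] [T0Space X] (A : Set X) :
    (IsDbpRetract (Set.univ : Set X) A ↔
      ∀ x : X, ∃ m ∈ minOpen x ∩ A, ∀ z ∈ minOpen x ∩ A, specLE z m) ∧
    (IsDbpRetract (Set.univ : Set X) A ↔
      ∀ x : X, x ∉ A → ∃ m ∈ minOpen x ∩ A, ∀ z ∈ minOpen x ∩ A, specLE z m) := by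
  have fwd : IsDbpRetract (Set.univ : Set X) A →
      ∀ x : X, ∃ m ∈ minOpen x ∩ A, ∀ z ∈ minOpen x ∩ A, specLE z m := by
    intro h x
    obtain ⟨m, hmA, hmle, hmmax⟩ := h.exists_max x (Set.mem_univ x)
    exact ⟨m, ⟨mem_minOpen.mpr hmle, hmA⟩, fun z hz => hmmax z hz.2 (mem_minOpen.mp hz.1)⟩
  have one_of_two : (∀ x : X, x ∉ A → ∃ m ∈ minOpen x ∩ A, ∀ z ∈ minOpen x ∩ A, specLE z m) →
      ∀ x : X, ∃ m ∈ minOpen x ∩ A, ∀ z ∈ minOpen x ∩ A, specLE z m := by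
    intro h x
    by_cases hxA : x ∈ A
    · exact ⟨x, ⟨mem_minOpen.mpr (specLE_refl x), hxA⟩, fun z hz => mem_minOpen.mp hz.1⟩
    · exact h x hxA
  have bwd : (∀ x : X, x ∉ A → ∃ m ∈ minOpen x ∩ A, ∀ z ∈ minOpen x ∩ A, specLE z m) →
      IsDbpRetract (Set.univ : Set X) A := fun h =>
    backward_dbp h (Set.univ \ A).ncard Set.univ rfl (Set.subset_univ A)
  exact ⟨⟨fwd, fun h => bwd (fun x _ => h x)⟩, ⟨fun h x _ => fwd h x, bwd⟩⟩
end

section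
/- Let X be a finite T₀-space and let A ⊆ X. Let 𝓕(X,A) = {f : X → X continuous : f ≤ Id_X, f ∘ f = f, and A ⊆ f(X)}, partially ordered by the pointwise specialization order, and let Ω(X,A) = {W ⊆ X : W is a dbp–retract of X and A ⊆ W}, partially ordered by set inclusion. Then the map f ↦ f(X) is an order isomorphism from 𝓕(X,A) onto Ω(X,A). -/
open unitInterval

set_option autoImplicit false

universe u v

section Aux

variable {X : Type u} [TopologicalSpace X]

lemma specLE_iff_specializes {x y : X} : specLE x y ↔ x ⤳ y :=
  specializes_iff_forall_open.symm

lemma isOpen_minOpen [Finite X] (x : X) : IsOpen (minOpen x) :=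
  Set.Finite.isOpen_sInter (Set.toFinite _) (fun _ h => h.1)

lemma mem_minOpen_iff {x y : X} : y ∈ minOpen x ↔ specLE y x := by
  simp only [minOpen, Set.mem_sInter, Set.mem_setOf_eq, and_imp, specLE]

/-- In a finite space, a map monotone w.r.t. specialization is continuous. -/
lemma continuous_of_spec_mono [Finite X] {g : X → X}
    (h : ∀ a b : X, a ⤳ b → g a ⤳ g b) : Continuous g := by
  rw [continuous_def]
  intro U hU
  have key : g ⁻¹' U = ⋃ y ∈ g ⁻¹' U, minOpen y := by
    ext a
    constructor
    · intro ha
      exact Set.mem_biUnion ha (mem_minOpen_iff.mpr (fun V hV hx => hx))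
    · intro ha
      rcases Set.mem_iUnion₂.mp ha with ⟨y, hy, hay⟩
      have hspec : a ⤳ y := specLE_iff_specializes.mp (mem_minOpen_iff.mp hay)
      exact (h a y hspec).mem_open hU hy
  rw [key]
  exact isOpen_biUnion fun y _ => isOpen_minOpen y

/-- A finite nonempty set has a specialization-minimal element (using T₀). -/
lemma exists_spec_minimal [Finite X] [T0Space X] {s : Set X} (hs : s.Nonempty) :
    ∃ x ∈ s, ∀ b ∈ s, b ⤳ x → b = x := by
  let r : X → X → Prop := fun a b => a ⤳ b ∧ a ≠ b
  have htrans : IsTrans X r :=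
    ⟨fun a b c hab hbc =>
      ⟨hab.1.trans hbc.1, fun h => hab.2 ((hab.1.antisymm (h ▸ hbc.1)).eq)⟩⟩
  have hirr : IsIrrefl X r := ⟨fun a h => h.2 rfl⟩
  obtain ⟨x, hx, hmin⟩ := (Finite.wellFounded_of_trans_of_irrefl r).has_min s hs
  refine ⟨x, hx, fun b hb hbx => ?_⟩
  by_contra hne
  exact hmin b hb ⟨hbx, hne⟩

lemma fix_of_mem_range {g : X → X} (hidem : ∀ x, g (g x) = g x) {y : X}
    (hy : y ∈ Set.range g) : g y = y := by
  obtain ⟨w, rfl⟩ := hy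
  exact hidem w

/-- The range of an idempotent descending map is a dbp-retract of any set containing it. -/
lemma isDbpRetract_range_aux [Finite X] [T0Space X] {f : X → X}
    (hmono : ∀ a b : X, a ⤳ b → f a ⤳ f b)
    (hle : ∀ x, f x ⤳ x) (hidem : ∀ x, f (f x) = f x) :
    ∀ (n : ℕ) (S : Set X), Set.range f ⊆ S → (S \ Set.range f).ncard = n →
      IsDbpRetract S (Set.range f) := by
  intro n
  induction n using Nat.strong_induction_on with
  | _ n ih =>
    intro S hsub hcard
    by_cases hS : S = Set.range f
    · rw [hS]; exact IsDbpRetract.refl _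
    · have hne : (S \ Set.range f).Nonempty := by
        rw [Set.diff_nonempty]
        intro hSsub
        exact hS (le_antisymm hSsub hsub)
      obtain ⟨x, hx, hmin⟩ := exists_spec_minimal hne
      have hxS : x ∈ S := hx.1
      have hxnr : x ∉ Set.range f := hx.2
      have hfxne : f x ≠ x := fun h => hxnr ⟨x, h⟩
      have hdbp : IsDownBeatPoint S x := by
        refine ⟨hxS, f x, hsub ⟨x, rfl⟩, hfxne, specLE_iff_specializes.mpr (hle x),
          fun z hz hzx hzspec => ?_⟩
        have hzr : z ∈ Set.range f := by
          by_contra hz'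
          exact hzx (hmin z ⟨hz, hz'⟩ (specLE_iff_specializes.mp hzspec))
        have h1 : f z ⤳ f x := hmono _ _ (specLE_iff_specializes.mp hzspec)
        rw [fix_of_mem_range hidem hzr] at h1
        exact specLE_iff_specializes.mpr h1
      refine IsDbpRetract.step x hdbp ?_
      have hsub' : Set.range f ⊆ S \ {x} := fun y hy =>
        ⟨hsub hy, fun h => hxnr (h ▸ hy)⟩
      have heq : (S \ {x}) \ Set.range f = (S \ Set.range f) \ {x} :=
        Set.diff_diff_comm
      have hlt : (((S \ {x}) \ Set.range f)).ncard < n := by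
        rw [heq, ← hcard]
        exact Set.ncard_diff_singleton_lt_of_mem hx (Set.toFinite _)
      exact ih _ hlt (S \ {x}) hsub' rfl

lemma isDbpRetract_range [Finite X] [T0Space X] {f : X → X}
    (hmono : ∀ a b : X, a ⤳ b → f a ⤳ f b)
    (hle : ∀ x, f x ⤳ x) (hidem : ∀ x, f (f x) = f x)
    {S : Set X} (hsub : Set.range f ⊆ S) : IsDbpRetract S (Set.range f) :=
  isDbpRetract_range_aux hmono hle hidem _ S hsub rfl

/-- Every dbp-retract is the range of an idempotent descending map. -/
lemma exists_retraction [Finite X] [T0Space X] {S T : Set X} (h : IsDbpRetract S T) :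
    ∀ f : X → X, (∀ a b : X, a ⤳ b → f a ⤳ f b) → (∀ x, f x ⤳ x) →
      (∀ x, f (f x) = f x) → Set.range f = S →
      ∃ g : X → X, (∀ a b : X, a ⤳ b → g a ⤳ g b) ∧ (∀ x, g x ⤳ x) ∧
        (∀ x, g (g x) = g x) ∧ Set.range g = T := by
  induction h with
  | refl S => exact fun f h1 h2 h3 h4 => ⟨f, h1, h2, h3, h4⟩
  | step x hx h ih =>
    rename_i S T
    intro f hmono hle hidem hrange
    obtain ⟨hxS, m, hmS, hmne, hmle, hmax⟩ := hx
    have hmx : m ⤳ x := specLE_iff_specializes.mp hmle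
    classical
    set r : X → X := fun y => if y = x then m else y with hr
    have hrx : r x = m := if_pos rfl
    have hrne : ∀ y : X, y ≠ x → r y = y := fun y hy => if_neg hy
    have hfS : ∀ y : X, f y ∈ S := fun y => hrange ▸ ⟨y, rfl⟩
    have hfixS : ∀ y ∈ S, f y = y := fun y hy =>
      fix_of_mem_range hidem (hrange ▸ hy)
    -- r is monotone on S
    have hrmonoS : ∀ a ∈ S, ∀ b ∈ S, a ⤳ b → r a ⤳ r b := by
      intro a ha b hb hab
      by_cases hbx : b = x
      · by_cases hax : a = x
        · rw [hbx, hax]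
        · rw [hbx, hrx, hrne a hax]
          exact specLE_iff_specializes.mp
            (hmax a ha hax (specLE_iff_specializes.mpr (hbx ▸ hab)))
      · rw [hrne b hbx]
        by_cases hax : a = x
        · rw [hax, hrx]; exact hmx.trans (hax ▸ hab)
        · rw [hrne a hax]; exact hab
    set g : X → X := fun y => r (f y) with hg
    have hgS : ∀ y : X, g y ∈ S ∧ g y ≠ x := by
      intro y
      by_cases hfy : f y = x
      · rw [hg]; simp only []
        rw [hfy, hrx]; exact ⟨hmS, hmne⟩
      · rw [hg]; simp only []
        rw [hrne _ hfy]; exact ⟨hfS y, hfy⟩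
    have hgmono : ∀ a b : X, a ⤳ b → g a ⤳ g b := fun a b hab =>
      hrmonoS (f a) (hfS a) (f b) (hfS b) (hmono a b hab)
    have hgle : ∀ y : X, g y ⤳ y := by
      intro y
      have h1 : r (f y) ⤳ f y := by
        by_cases hfy : f y = x
        · rw [hfy, hrx]; exact hmx
        · rw [hrne _ hfy]
      exact h1.trans (hle y)
    have hgidem : ∀ y : X, g (g y) = g y := by
      intro y
      obtain ⟨hmem, hne⟩ := hgS y
      show r (f (g y)) = g y
      rw [hfixS _ hmem, hrne _ hne]
    have hgrange : Set.range g = S \ {x} := by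
      ext z
      constructor
      · rintro ⟨w, rfl⟩
        exact ⟨(hgS w).1, (hgS w).2⟩
      · rintro ⟨hzS, hzx⟩
        obtain ⟨w, hw⟩ : z ∈ Set.range f := hrange ▸ hzS
        refine ⟨w, ?_⟩
        show r (f w) = z
        rw [hw, hrne _ hzx]
    exact ih g hgmono hgle hgidem hgrange

end Aux

/-- Let `X` be a finite T₀-space and `A ⊆ X`. The map `f ↦ f(X)` is an
order isomorphism from `𝓕(X,A)` (idempotent continuous maps `f ≤ Id_X` with `A ⊆ f(X)`,
ordered by the pointwise specialization order) onto `Ω(X,A)` (dbp–retracts of `X`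
containing `A`, ordered by inclusion). -/
theorem F_orderIso_Omega
    {X : Type u} [TopologicalSpace X] [Finite X] [T0Space X] (A : Set X) :
    ∃ e : {f : C(X, X) // (∀ x, specLE (f x) x) ∧ (∀ x, f (f x) = f x) ∧ A ⊆ Set.range f} ≃
          {W : Set X // IsDbpRetract (Set.univ : Set X) W ∧ A ⊆ W},
      (∀ f, (e f : Set X) = Set.range ⇑f.1) ∧
      ∀ f g, (∀ x, specLE (f.1 x) (g.1 x)) ↔
        (e f : Set X) ⊆ (e g : Set X) := by
  classical
  set F := {f : C(X, X) // (∀ x, specLE (f x) x) ∧ (∀ x, f (f x) = f x) ∧ A ⊆ Set.range f}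
    with hF
  set Ω := {W : Set X // IsDbpRetract (Set.univ : Set X) W ∧ A ⊆ W} with hΩ
  have mono : ∀ (f : C(X, X)) (a b : X), a ⤳ b → f a ⤳ f b :=
    fun f a b h => h.map f.continuous
  have le' : ∀ f : F, ∀ x, (f.1 : X → X) x ⤳ x :=
    fun f x => specLE_iff_specializes.mp (f.2.1 x)
  -- the forward map
  have φprop : ∀ f : F, IsDbpRetract (Set.univ : Set X) (Set.range ⇑f.1) ∧
      A ⊆ Set.range ⇑f.1 :=
    fun f => ⟨isDbpRetract_range (mono f.1) (le' f) f.2.2.1 (Set.subset_univ _), f.2.2.2⟩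
  set φ : F → Ω := fun f => ⟨Set.range ⇑f.1, φprop f⟩ with hφ
  -- order relation via ranges
  have le_of_subset : ∀ f g : F, Set.range ⇑f.1 ⊆ Set.range ⇑g.1 →
      ∀ x, (f.1 : X → X) x ⤳ (g.1 : X → X) x := by
    intro f g hsub x
    have h1 : (g.1 : X → X) (f.1 x) = f.1 x :=
      fix_of_mem_range g.2.2.1 (hsub ⟨x, rfl⟩)
    have h2 : (g.1 : X → X) (f.1 x) ⤳ g.1 x := mono g.1 _ _ (le' f x)
    rwa [h1] at h2
  have subset_of_le : ∀ f g : F, (∀ x, (f.1 : X → X) x ⤳ (g.1 : X → X) x) →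
      Set.range ⇑f.1 ⊆ Set.range ⇑g.1 := by
    rintro f g hle _ ⟨x, rfl⟩
    have h1 : (f.1 : X → X) x ⤳ (g.1 : X → X) (f.1 x) := by
      have := hle (f.1 x)
      rwa [f.2.2.1 x] at this
    have h2 : (g.1 : X → X) (f.1 x) ⤳ f.1 x := le' g (f.1 x)
    exact ⟨f.1 x, ((h2.antisymm h1).eq)⟩
  have hinj : Function.Injective φ := by
    intro f g h
    have hr : Set.range ⇑f.1 = Set.range ⇑g.1 := congrArg Subtype.val h
    have h1 := le_of_subset f g hr.le
    have h2 := le_of_subset g f hr.ge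
    ext x
    exact ((h1 x).antisymm (h2 x)).eq
  have hsurj : Function.Surjective φ := by
    rintro ⟨W, hW, hAW⟩
    obtain ⟨g, hgmono, hgle, hgidem, hgrange⟩ :=
      exists_retraction hW id (fun a b h => h) (fun x => specializes_refl x)
        (fun x => rfl) Set.range_id
    refine ⟨⟨⟨g, continuous_of_spec_mono hgmono⟩,
      fun x => specLE_iff_specializes.mpr (hgle x), hgidem, ?_⟩, ?_⟩
    · show A ⊆ Set.range g
      rw [hgrange]; exact hAW
    · apply Subtype.ext
      show Set.range g = W
      exact hgrange
  refine ⟨Equiv.ofBijective φ ⟨hinj, hsurj⟩, fun f => rfl, fun f g => ?_⟩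
  constructor
  · intro h
    exact subset_of_le f g (fun x => specLE_iff_specializes.mp (h x))
  · intro h x
    exact specLE_iff_specializes.mpr (le_of_subset f g h x)
end
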